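/- In the discrimination setting, for every discrimination level δ ∈ (0,1) there exists a unique partiality level p ∈ [0,1) with I(p, δ) = 0, namely p̂(δ) := δ·(1/√(1+3δ²) − 1/2), and p̂(δ) > 0. Moreover p̂ is continuous on (0,1) and non-monotone: with δ̄ := √((2^{2/3} − 1)/3) ∈ (0,1), p̂ is strictly increasing on (0, δ̄) and strictly decreasing on (δ̄, 1). -/

import Mathlib

noncomputable section

/-! Discrimination setting (Section 5.2 of the paper): `K = 2`, prior means `0`,
prior variances `Σ⁰₁ = Σ⁰₂ = 1`, budget `T = 1`.  For discrimination level
`δ ∈ (0,1)` the politician's weights are `((1+δ)/2, (1−δ)/2)`; for partiality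
level `p ∈ [0,1)` the advisor's weights are `((1−p)/2, (1+p)/2)`.

* `ah1 p δ, ah2 p δ` are the auxiliary weights `α̂₁(p,δ), α̂₂(p,δ)`.
* `tau2aux p δ` is `τ₂^aux(p,δ)` and `tau2star p δ = min{τ₂^aux(p,δ), 1}` is the
  advisor's equilibrium allocation of tests to group 2 (group 1 gets the rest).
* `omega τ₂ δ` is utilitarian welfare as a function of the allocation, and
  `W p δ = ω(τ₂*(p,δ), δ)` is equilibrium welfare.
* `Dlt τ₂ δ` is the difference of the two groups' ex ante expected utilities and
  `Ineq p δ = |Δ(τ₂*(p,δ), δ)|` is equilibrium inequality. -/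

/-- Auxiliary weight `α̂₁(p,δ)`. -/
def ah1 (p δ : ℝ) : ℝ :=
  if p < (1 - δ) / 2 then (1 / 2) * Real.sqrt ((1 + δ) * (1 - 2 * p - δ)) else 0

/-- Auxiliary weight `α̂₂(p,δ)`. -/
def ah2 (p δ : ℝ) : ℝ := (1 / 2) * Real.sqrt ((1 - δ) * (1 + 2 * p + δ))

/-- `τ₂^aux(p,δ)`. -/
def tau2aux (p δ : ℝ) : ℝ := (2 * ah2 p δ - ah1 p δ) / (ah1 p δ + ah2 p δ)

/-- The advisor's equilibrium allocation of tests to group 2, `τ₂*(p,δ)`. -/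
def tau2star (p δ : ℝ) : ℝ := min (tau2aux p δ) 1

/-- Utilitarian welfare `ω(τ₂, δ)` from splitting the budget as `(1−τ₂, τ₂)`. -/
def omega (τ2 δ : ℝ) : ℝ :=
  -3 - δ ^ 2 + ((1 + δ) ^ 2 / 2 + (1 + δ) * (1 - τ2)) / (2 - τ2)
    + ((1 - δ) ^ 2 / 2 + (1 - δ) * τ2) / (1 + τ2)

/-- Equilibrium welfare `W(p,δ)`. -/
def W (p δ : ℝ) : ℝ := omega (tau2star p δ) δ

/-- Difference `Δ(τ₂,δ)` of the two groups' ex ante expected utilities. -/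
def Dlt (τ2 δ : ℝ) : ℝ :=
  (1 + δ) * (1 - τ2) / (2 - τ2) - (1 - δ) * τ2 / (1 + τ2)

/-- Equilibrium inequality `I(p,δ)`. -/
def Ineq (p δ : ℝ) : ℝ := |Dlt (tau2star p δ) δ|


/-- The unique equality-restoring partiality level. -/
def ph (δ : ℝ) : ℝ := δ * (1 / Real.sqrt (1 + 3 * δ ^ 2) - 1 / 2)

/-- The turning point of `ph`. -/
def db : ℝ := Real.sqrt (((2 : ℝ) ^ ((2 : ℝ) / 3) - 1) / 3)

private lemma eq_of_sq_eq {x y : ℝ} (hx : 0 ≤ x) (hy : 0 ≤ y) (h : x ^ 2 = y ^ 2) : x = y := by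
  nlinarith [sq_nonneg (x - y)]

private lemma ah1_sq {p δ : ℝ} (hδ : -1 ≤ δ) (h : p < (1 - δ) / 2) :
    (ah1 p δ) ^ 2 = (1 + δ) * (1 - 2 * p - δ) / 4 := by
  rw [ah1, if_pos h, mul_pow,
    Real.sq_sqrt (by nlinarith : (0:ℝ) ≤ (1 + δ) * (1 - 2 * p - δ))]
  ring

private lemma ah2_sq {p δ : ℝ} (h : (0:ℝ) ≤ (1 - δ) * (1 + 2 * p + δ)) :
    (ah2 p δ) ^ 2 = (1 - δ) * (1 + 2 * p + δ) / 4 := by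
  rw [ah2, mul_pow, Real.sq_sqrt h]; ring

set_option maxHeartbeats 1600000 in
private lemma ph_main (δ : ℝ) (hδ0 : 0 < δ) (hδ1 : δ < 1) :
    0 < ph δ ∧ ph δ < 1 ∧ Ineq (ph δ) δ = 0 ∧
      ∀ p ∈ Set.Ico (0:ℝ) 1, Ineq p δ = 0 → p = ph δ := by
  obtain ⟨s, hsdef⟩ : ∃ s : ℝ, s = Real.sqrt (1 + 3 * δ ^ 2) := ⟨_, rfl⟩
  have hs2 : s ^ 2 = 1 + 3 * δ ^ 2 := by rw [hsdef]; exact Real.sq_sqrt (by positivity)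
  have hs0 : 0 < s := by rw [hsdef]; exact Real.sqrt_pos.mpr (by positivity)
  have hsne : s ≠ 0 := hs0.ne'
  have h2δ : (2 * δ) ≠ 0 := by linarith
  have hs1 : 1 < s := by nlinarith [hs2, mul_pos hδ0 hδ0]
  have h2d : 2 * δ < s := by
    nlinarith [hs2, mul_pos (by linarith : (0:ℝ) < 1 - δ) (by linarith : (0:ℝ) < 1 + δ)]
  have hsd : s < 1 + δ := by
    nlinarith [hs2, mul_pos hδ0 (by linarith : (0:ℝ) < 1 - δ)]
  have hs3d : 3 * δ - 1 < s := by
    rcases le_or_gt (3 * δ - 1) 0 with h | h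
    · linarith
    · nlinarith [hs2, mul_pos hδ0 (by linarith : (0:ℝ) < 1 - δ)]
  have h2s : s < 2 := by
    nlinarith [hs2, mul_pos (by linarith : (0:ℝ) < 1 - δ) (by linarith : (0:ℝ) < 1 + δ)]
  have hph : ph δ = δ * (1 / s - 1 / 2) := by rw [hsdef]; rfl
  obtain ⟨τ, hτdef⟩ : ∃ τ : ℝ, τ = (s - 1 + δ) / (2 * δ) := ⟨_, rfl⟩
  have hτ0 : 0 < τ := by
    rw [hτdef]; exact div_pos (by linarith) (by linarith)
  have hτ1 : τ < 1 := by rw [hτdef, div_lt_one (by linarith)]; linarith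
  have hτval : 2 * δ * τ = s - 1 + δ := by
    rw [hτdef]; field_simp [h2δ]
  have h1τ : 2 * δ * (1 + τ) = s - 1 + 3 * δ := by linear_combination hτval
  have h2τ : 2 * δ * (2 - τ) = 1 + 3 * δ - s := by linear_combination -hτval
  have hquadτ : 2 * δ * τ ^ 2 + 2 * (1 - δ) * τ - (1 + δ) = 0 := by
    have h : 2 * δ * (2 * δ * τ ^ 2 + 2 * (1 - δ) * τ - (1 + δ)) = 0 := by
      linear_combination (2 * δ * τ + (s - 1 + δ) + 2 * (1 - δ)) * hτval + hs2
    rcases mul_eq_zero.mp h with h' | h'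
    · exact absurd h' h2δ
    · exact h'
  have hss : s * (1 / s) = 1 := by field_simp
  have hq1 : s * (1 - 2 * ph δ - δ) = s - 2 * δ := by
    rw [hph]; linear_combination (-2 * δ) * hss
  have hq2 : s * (1 + 2 * ph δ + δ) = s + 2 * δ := by
    rw [hph]; linear_combination (2 * δ) * hss
  have hp1pos : 0 < 1 - 2 * ph δ - δ := by
    have h : 1 - 2 * ph δ - δ = (s - 2 * δ) / s := by
      rw [eq_div_iff hsne]; linear_combination hq1
    rw [h]; exact div_pos (by linarith) hs0
  have hp2pos : 0 < 1 + 2 * ph δ + δ := by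
    have h : 1 + 2 * ph δ + δ = (s + 2 * δ) / s := by
      rw [eq_div_iff hsne]; linear_combination hq2
    rw [h]; exact div_pos (by linarith) hs0
  have hphpos : 0 < ph δ := by
    rw [hph]
    have : (0:ℝ) < 1 / s - 1 / 2 := by
      rw [sub_pos, div_lt_div_iff₀ (by norm_num) hs0]; linarith
    exact mul_pos hδ0 this
  have hphlt : ph δ < 1 := by
    have h1s : 1 / s < 1 := by rw [div_lt_one hs0]; exact hs1
    have h1s0 : (0:ℝ) < 1 / s := by positivity
    rw [hph]
    calc δ * (1 / s - 1 / 2) < δ * 1 := mul_lt_mul_of_pos_left (by linarith) hδ0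
      _ < 1 := by linarith
  have hbr : ph δ < (1 - δ) / 2 := by linarith
  have hA2 : (ah1 (ph δ) δ) ^ 2 = (1 + δ) * (1 - 2 * ph δ - δ) / 4 :=
    ah1_sq (by linarith) hbr
  have hB2 : (ah2 (ph δ) δ) ^ 2 = (1 - δ) * (1 + 2 * ph δ + δ) / 4 :=
    ah2_sq (mul_nonneg (by linarith) hp2pos.le)
  have hApos : 0 < ah1 (ph δ) δ := by
    rw [ah1, if_pos hbr]
    exact mul_pos (by norm_num)
      (Real.sqrt_pos.mpr (mul_pos (by linarith) hp1pos))
  have hBpos : 0 < ah2 (ph δ) δ := by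
    rw [ah2]
    exact mul_pos (by norm_num)
      (Real.sqrt_pos.mpr (mul_pos (by linarith) hp2pos))
  have hkey : ah1 (ph δ) δ * (1 + τ) = ah2 (ph δ) δ * (2 - τ) := by
    apply eq_of_sq_eq (mul_nonneg hApos.le (by linarith)) (mul_nonneg hBpos.le (by linarith))
    rw [mul_pow, mul_pow, hA2, hB2]
    have hcl : 4 * s * (2 * δ) ^ 2 * ((1 + δ) * (1 - 2 * ph δ - δ) / 4 * (1 + τ) ^ 2)
        = 4 * s * (2 * δ) ^ 2 * ((1 - δ) * (1 + 2 * ph δ + δ) / 4 * (2 - τ) ^ 2) := by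
      linear_combination ((1 + δ) * (2 * δ * (1 + τ)) ^ 2) * hq1
        + ((1 + δ) * (s - 2 * δ) * (2 * δ * (1 + τ) + (s - 1 + 3 * δ))) * h1τ
        - ((1 - δ) * (2 * δ * (2 - τ)) ^ 2) * hq2
        - ((1 - δ) * (s + 2 * δ) * (2 * δ * (2 - τ) + (1 + 3 * δ - s))) * h2τ
        + (4 * δ + 2 * s * δ) * hs2
    exact mul_left_cancel₀
      (mul_pos (mul_pos (by norm_num : (0:ℝ) < 4) hs0)
        (pow_pos (by linarith : (0:ℝ) < 2 * δ) 2)).ne' hcl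
  have htaux : tau2aux (ph δ) δ = τ := by
    rw [tau2aux, div_eq_iff (add_pos hApos hBpos).ne']
    linear_combination -hkey
  have htstar : tau2star (ph δ) δ = τ := by
    rw [tau2star, htaux, min_eq_left hτ1.le]
  have hDlt : Dlt τ δ = 0 := by
    rw [Dlt, div_sub_div _ _ (by linarith : (2:ℝ) - τ ≠ 0) (by linarith : (1:ℝ) + τ ≠ 0),
      div_eq_zero_iff]
    left
    linear_combination -hquadτ
  refine ⟨hphpos, hphlt, by rw [Ineq, htstar, hDlt, abs_zero], ?_⟩
  rintro p ⟨hp0, hplt⟩ hI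
  rw [Ineq, abs_eq_zero] at hI
  obtain ⟨t, htdef⟩ : ∃ t : ℝ, t = tau2star p δ := ⟨_, rfl⟩
  rw [← htdef] at hI
  have htle : t ≤ 1 := by rw [htdef, tau2star]; exact min_le_right _ _
  have hBpos' : 0 < ah2 p δ := by
    rw [ah2]
    exact mul_pos (by norm_num) (Real.sqrt_pos.mpr (mul_pos (by linarith) (by linarith)))
  by_cases hc : p < (1 - δ) / 2
  · -- interior branch
    have hApos' : 0 < ah1 p δ := by
      rw [ah1, if_pos hc]
      exact mul_pos (by norm_num) (Real.sqrt_pos.mpr (mul_pos (by linarith) (by linarith)))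
    have htgt : -1 < t := by
      have h1 : -1 < tau2aux p δ := by
        rw [tau2aux, lt_div_iff₀ (add_pos hApos' hBpos')]
        linarith
      rw [htdef, tau2star]
      exact lt_min h1 (by norm_num)
    have hquadt : 2 * δ * t ^ 2 + 2 * (1 - δ) * t - (1 + δ) = 0 := by
      rw [Dlt, div_sub_div _ _ (by linarith : (2:ℝ) - t ≠ 0) (by linarith : (1:ℝ) + t ≠ 0),
        div_eq_zero_iff] at hI
      rcases hI with hI | hI
      · linear_combination -hI
      · exact absurd hI (mul_ne_zero (by linarith) (by linarith))
    have hfac : (t - τ) * (2 * δ * (t + τ) + 2 * (1 - δ)) = 0 := by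
      linear_combination hquadt - hquadτ
    have hfac2 : 0 < 2 * δ * (t + τ) + 2 * (1 - δ) := by
      have h' : 0 < δ * (t + 1) := mul_pos hδ0 (by linarith)
      linarith [hτval, hs3d]
    have ht : t = τ := by
      rcases mul_eq_zero.mp hfac with h | h
      · linarith
      · linarith
    have htaux' : tau2aux p δ = τ := by
      rcases le_or_gt (tau2aux p δ) 1 with h | h
      · rw [htdef, tau2star, min_eq_left h] at ht; exact ht.symm ▸ rfl
      · exfalso
        rw [htdef, tau2star, min_eq_right h.le] at ht
        linarith
    have hkey' : ah1 p δ * (1 + τ) = ah2 p δ * (2 - τ) := by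
      rw [tau2aux, div_eq_iff (add_pos hApos' hBpos').ne'] at htaux'
      linear_combination -htaux'
    have hsq : (ah1 p δ * (1 + τ)) ^ 2 = (ah2 p δ * (2 - τ)) ^ 2 := by rw [hkey']
    have hsqh : (ah1 (ph δ) δ * (1 + τ)) ^ 2 = (ah2 (ph δ) δ * (2 - τ)) ^ 2 := by rw [hkey]
    rw [mul_pow, mul_pow, ah1_sq (by linarith) hc,
      ah2_sq (mul_nonneg (by linarith) (by linarith))] at hsq
    rw [mul_pow, mul_pow, hA2, hB2] at hsqh
    have hdiff : (p - ph δ) * ((1 + δ) * (1 + τ) ^ 2 + (1 - δ) * (2 - τ) ^ 2) = 0 := by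
      linear_combination 2 * hsqh - 2 * hsq
    have hbr2 : 0 < (1 + δ) * (1 + τ) ^ 2 + (1 - δ) * (2 - τ) ^ 2 := by
      have h1 : 0 < (1 + δ) * (1 + τ) ^ 2 := mul_pos (by linarith) (pow_pos (by linarith) 2)
      have h2 : 0 ≤ (1 - δ) * (2 - τ) ^ 2 := mul_nonneg (by linarith) (sq_nonneg _)
      linarith
    rcases mul_eq_zero.mp hdiff with h | h
    · linarith
    · linarith
  · -- boundary branch : allocation is (0,1), inequality nonzero
    exfalso
    have haux : tau2aux p δ = 2 := by
      rw [tau2aux, ah1, if_neg hc, sub_zero, zero_add, mul_div_assoc,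
        div_self hBpos'.ne', mul_one]
    have ht1 : t = 1 := by rw [htdef, tau2star, haux]; norm_num
    rw [ht1, Dlt] at hI
    norm_num at hI
    linarith

private lemma ph_cont : Continuous ph := by
  have h1 : Continuous fun δ : ℝ => Real.sqrt (1 + 3 * δ ^ 2) :=
    (continuous_const.add (continuous_const.mul (continuous_pow 2))).sqrt
  have h2 : Continuous fun δ : ℝ => 1 / Real.sqrt (1 + 3 * δ ^ 2) - 1 / 2 := by
    refine Continuous.sub ?_ continuous_const
    exact continuous_const.div h1 fun x => (Real.sqrt_pos.mpr (by positivity)).ne'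
  exact continuous_id.mul h2

private lemma ph_deriv (x : ℝ) :
    HasDerivAt ph (1 / Real.sqrt (1 + 3 * x ^ 2) ^ 3 - 1 / 2) x := by
  have hu : (0:ℝ) < 1 + 3 * x ^ 2 := by positivity
  have hs0 : 0 < Real.sqrt (1 + 3 * x ^ 2) := Real.sqrt_pos.mpr hu
  have hs2 : Real.sqrt (1 + 3 * x ^ 2) ^ 2 = 1 + 3 * x ^ 2 := Real.sq_sqrt hu.le
  have h1 : HasDerivAt (fun y : ℝ => 1 + 3 * y ^ 2) (6 * x) x := by
    have h := ((hasDerivAt_pow 2 x).const_mul (3:ℝ)).const_add (1:ℝ)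
    simp only [Nat.cast_ofNat] at h
    refine h.congr_deriv ?_
    ring
  have h2 : HasDerivAt (fun y : ℝ => Real.sqrt (1 + 3 * y ^ 2))
      (6 * x / (2 * Real.sqrt (1 + 3 * x ^ 2))) x := h1.sqrt hu.ne'
  have h3 : HasDerivAt (fun y : ℝ => (Real.sqrt (1 + 3 * y ^ 2))⁻¹)
      (-(6 * x / (2 * Real.sqrt (1 + 3 * x ^ 2))) / Real.sqrt (1 + 3 * x ^ 2) ^ 2) x :=
    h2.inv hs0.ne'
  have h4 := (hasDerivAt_id' x).mul (h3.sub_const (1/2 : ℝ))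
  have hfun : ph = fun y : ℝ => y * ((Real.sqrt (1 + 3 * y ^ 2))⁻¹ - 1 / 2) := by
    funext y; rw [ph, one_div]
  rw [hfun]
  refine h4.congr_deriv ?_
  field_simp
  linear_combination 2 * hs2

/-- Lemma 2 of the paper.  For every `δ ∈ (0,1)` the unique
partiality level in `[0,1)` restoring equality is
`p̂(δ) = δ(1/√(1+3δ²) − 1/2) > 0`; moreover `p̂` is continuous and non-monotone,
strictly increasing on `(0, δ̄)` and strictly decreasing on `(δ̄, 1)` with
`δ̄ = √((2^{2/3} − 1)/3)`. -/
theorem stmt_13 :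
    let phat : ℝ → ℝ := fun δ => δ * (1 / Real.sqrt (1 + 3 * δ ^ 2) - 1 / 2)
    let δbar : ℝ := Real.sqrt (((2 : ℝ) ^ ((2 : ℝ) / 3) - 1) / 3)
    (∀ δ ∈ Set.Ioo (0 : ℝ) 1,
      0 < phat δ ∧ phat δ < 1 ∧ Ineq (phat δ) δ = 0 ∧
      ∀ p ∈ Set.Ico (0 : ℝ) 1, Ineq p δ = 0 → p = phat δ) ∧
    ContinuousOn phat (Set.Ioo (0 : ℝ) 1) ∧
    δbar ∈ Set.Ioo (0 : ℝ) 1 ∧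
    StrictMonoOn phat (Set.Ioo (0 : ℝ) δbar) ∧
    StrictAntiOn phat (Set.Ioo δbar 1) := by
  show (∀ δ ∈ Set.Ioo (0 : ℝ) 1,
      0 < ph δ ∧ ph δ < 1 ∧ Ineq (ph δ) δ = 0 ∧
      ∀ p ∈ Set.Ico (0 : ℝ) 1, Ineq p δ = 0 → p = ph δ) ∧
    ContinuousOn ph (Set.Ioo (0 : ℝ) 1) ∧
    db ∈ Set.Ioo (0 : ℝ) 1 ∧
    StrictMonoOn ph (Set.Ioo (0 : ℝ) db) ∧
    StrictAntiOn ph (Set.Ioo db 1)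
  have h21 : (1:ℝ) < (2 : ℝ) ^ ((2 : ℝ) / 3) := by
    rw [Real.one_lt_rpow_iff_of_pos (by norm_num)]
    exact Or.inl ⟨by norm_num, by norm_num⟩
  have hX3 : ((2 : ℝ) ^ ((2 : ℝ) / 3)) ^ (3:ℕ) = 4 := by
    rw [← Real.rpow_natCast ((2:ℝ) ^ ((2:ℝ)/3)) 3, ← Real.rpow_mul (by norm_num : (0:ℝ) ≤ 2)]
    norm_num
  have hX4 : (2 : ℝ) ^ ((2 : ℝ) / 3) < 4 := by
    by_contra h
    push_neg at h
    have h64 : (4:ℝ) ^ (3:ℕ) ≤ ((2 : ℝ) ^ ((2 : ℝ) / 3)) ^ (3:ℕ) :=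
      pow_le_pow_left₀ (by norm_num) h 3
    rw [hX3] at h64
    norm_num at h64
  have hc0 : (0:ℝ) < ((2 : ℝ) ^ ((2 : ℝ) / 3) - 1) / 3 := by linarith
  have hc1 : ((2 : ℝ) ^ ((2 : ℝ) / 3) - 1) / 3 < 1 := by linarith
  have hdb0 : 0 < db := Real.sqrt_pos.mpr hc0
  have hdb1 : db < 1 := by
    have := Real.sqrt_lt_sqrt hc0.le hc1
    rwa [Real.sqrt_one] at this
  have hdb2 : db ^ 2 = ((2 : ℝ) ^ ((2 : ℝ) / 3) - 1) / 3 := Real.sq_sqrt hc0.le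
  refine ⟨fun δ hδ => ph_main δ hδ.1 hδ.2, ph_cont.continuousOn, ⟨hdb0, hdb1⟩, ?_, ?_⟩
  · apply strictMonoOn_of_deriv_pos (convex_Ioo _ _) ph_cont.continuousOn
    intro x hx
    rw [interior_Ioo] at hx
    obtain ⟨hx0, hxd⟩ := hx
    rw [(ph_deriv x).deriv]
    set g : ℝ := Real.sqrt (1 + 3 * x ^ 2) with hgdef
    have hg0 : 0 < g := Real.sqrt_pos.mpr (by positivity)
    have hg2 : g ^ 2 = 1 + 3 * x ^ 2 := Real.sq_sqrt (by positivity)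
    have hx2 : x ^ 2 < db ^ 2 := by
      have := pow_lt_pow_left₀ hxd hx0.le (n := 2) (by norm_num)
      simpa using this
    have hg2lt : g ^ 2 < (2 : ℝ) ^ ((2 : ℝ) / 3) := by
      rw [hg2]; rw [hdb2] at hx2; linarith
    have hg6 : (g ^ 3) ^ 2 < 4 := by
      calc (g ^ 3) ^ 2 = (g ^ 2) ^ 3 := by ring
        _ < ((2 : ℝ) ^ ((2 : ℝ) / 3)) ^ (3:ℕ) :=
            pow_lt_pow_left₀ hg2lt (sq_nonneg g) (by norm_num)
        _ = 4 := hX3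
    have hg3 : g ^ 3 < 2 := by nlinarith [pow_pos hg0 3]
    have : (1:ℝ) / 2 < 1 / g ^ 3 := by
      rw [div_lt_div_iff₀ (by norm_num) (pow_pos hg0 3)]
      linarith
    linarith
  · apply strictAntiOn_of_deriv_neg (convex_Ioo _ _) ph_cont.continuousOn
    intro x hx
    rw [interior_Ioo] at hx
    obtain ⟨hxd, hx1⟩ := hx
    rw [(ph_deriv x).deriv]
    set g : ℝ := Real.sqrt (1 + 3 * x ^ 2) with hgdef
    have hg0 : 0 < g := Real.sqrt_pos.mpr (by positivity)
    have hg2 : g ^ 2 = 1 + 3 * x ^ 2 := Real.sq_sqrt (by positivity)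
    have hx2 : db ^ 2 < x ^ 2 := by
      have := pow_lt_pow_left₀ hxd hdb0.le (n := 2) (by norm_num)
      simpa using this
    have hg2gt : (2 : ℝ) ^ ((2 : ℝ) / 3) < g ^ 2 := by
      rw [hg2]; rw [hdb2] at hx2; linarith
    have hg6 : 4 < (g ^ 3) ^ 2 := by
      calc (4:ℝ) = ((2 : ℝ) ^ ((2 : ℝ) / 3)) ^ (3:ℕ) := hX3.symm
        _ < (g ^ 2) ^ 3 :=
            pow_lt_pow_left₀ hg2gt (by positivity) (by norm_num)
        _ = (g ^ 3) ^ 2 := by ring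
    have hg3 : 2 < g ^ 3 := by nlinarith [pow_pos hg0 3]
    have : (1:ℝ) / g ^ 3 < 1 / 2 := by
      rw [div_lt_div_iff₀ (pow_pos hg0 3) (by norm_num)]
      linarith
    linarith
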